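/- Let $0 < \tau_e < \tau_c < \tau_r < 1$, $c_a, c_b > 0$, $0 < b < a < 1$. Set $\phi_a = 1 + c_a/T^a$, $\phi_b = 1 - c_b/T^b$, $k_e = \lfloor \tau_e T \rfloor$, $k_c = \lfloor \tau_c T \rfloor$, $k_r = \lfloor \tau_r T \rfloor$. Then for every $\alpha_1 \in \mathbb{R}$ and $\alpha_3, \alpha_4 > 0$, one has $T^{\alpha_1} \phi_a^{\alpha_3(k_c - k_e)} \phi_b^{\alpha_4(k_r - k_c)} \to 0$ as $T \to \infty$. -/
import Mathlib


open Filter Real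

private lemma stmt3_aux (τe τc τr ca cb a b : ℝ)
    (hτ0 : 0 < τe) (hτ1 : τe < τc) (hτ2 : τc < τr) (hτ3 : τr < 1)
    (hca : 0 < ca) (hcb : 0 < cb) (hb : 0 < b) (hba : b < a) (ha1 : a < 1)
    (α₁ α₃ α₄ : ℝ) (hα₃ : 0 < α₃) (hα₄ : 0 < α₄) :
    Tendsto (fun x : ℝ =>
      α₁ * Real.log x
      + α₃ * ((⌊τc * x⌋₊ : ℝ) - (⌊τe * x⌋₊ : ℝ)) * Real.log (1 + ca / x ^ a)
      + α₄ * ((⌊τr * x⌋₊ : ℝ) - (⌊τc * x⌋₊ : ℝ)) * Real.log (1 - cb / x ^ b))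
      atTop atBot := by
  have hτc : 0 < τc := lt_trans hτ0 hτ1
  have hτrc : 0 < τr - τc := by linarith
  set C₁ := α₃ * τc * ca with hC₁
  set C₂ := α₄ * ((τr - τc) / 2) * cb with hC₂def
  have hC₂pos : 0 < C₂ := by
    apply mul_pos (mul_pos hα₄ (by linarith)) hcb
  -- the dominating function tends to -∞
  have hg : Tendsto (fun x : ℝ => α₁ * Real.log x + C₁ * x ^ (1 - a) - C₂ * x ^ (1 - b))
      atTop atBot := by
    have hbr : Tendsto (fun x : ℝ => α₁ * (Real.log x / x ^ (1 - b)) + C₁ * x ^ (b - a) - C₂)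
        atTop (nhds (α₁ * 0 + C₁ * 0 - C₂)) := by
      refine Tendsto.sub_const (Tendsto.add ?_ ?_) C₂
      · exact ((isLittleO_log_rpow_atTop (by linarith : (0:ℝ) < 1 - b)).tendsto_div_nhds_zero).const_mul _
      · have h := tendsto_rpow_neg_atTop (y := a - b) (by linarith)
        simpa [neg_sub] using h.const_mul C₁
    have hx : Tendsto (fun x : ℝ => x ^ (1 - b)) atTop atTop :=
      tendsto_rpow_atTop (by linarith)
    have hprod := hx.atTop_mul_neg (C := α₁ * 0 + C₁ * 0 - C₂) (by simpa using hC₂pos) hbr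
    refine hprod.congr' ?_
    filter_upwards [eventually_gt_atTop (0:ℝ)] with x hx0
    have hne : x ^ (1 - b) ≠ 0 := (rpow_pos_of_pos hx0 _).ne'
    have hL : x ^ (1 - b) * (Real.log x / x ^ (1 - b)) = Real.log x := by
      field_simp
    have h1 : x ^ (1 - b) * x ^ (b - a) = x ^ (1 - a) := by
      rw [← rpow_add hx0]; congr 1; ring
    have hexpand : x ^ (1 - b) * (α₁ * (Real.log x / x ^ (1 - b)) + C₁ * x ^ (b - a) - C₂)
        = α₁ * (x ^ (1 - b) * (Real.log x / x ^ (1 - b)))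
          + C₁ * (x ^ (1 - b) * x ^ (b - a)) - C₂ * x ^ (1 - b) := by ring
    rw [hexpand, hL, h1]
  refine tendsto_atBot_mono' atTop ?_ hg
  have hbig : Tendsto (fun x : ℝ => x ^ b) atTop atTop := tendsto_rpow_atTop hb
  filter_upwards [eventually_ge_atTop (max 1 (2 / (τr - τc))),
      hbig.eventually_gt_atTop cb] with x hx1 hxb
  have hx1' : (1:ℝ) ≤ x := le_trans (le_max_left _ _) hx1
  have hx0 : (0:ℝ) < x := by linarith
  have hxa : (0:ℝ) < x ^ a := rpow_pos_of_pos hx0 _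
  have hxbpos : (0:ℝ) < x ^ b := rpow_pos_of_pos hx0 _
  have hfrac : cb / x ^ b < 1 := (div_lt_one hxbpos).2 hxb
  have hfracpos : 0 < cb / x ^ b := div_pos hcb hxbpos
  have hfa : 0 < ca / x ^ a := div_pos hca hxa
  -- term 2 bound
  have hL2 : 0 ≤ Real.log (1 + ca / x ^ a) := Real.log_nonneg (by linarith)
  have hL2' : Real.log (1 + ca / x ^ a) ≤ ca / x ^ a := by
    have := Real.log_le_sub_one_of_pos (x := 1 + ca / x ^ a) (by linarith)
    linarith
  have hd2 : ((⌊τc * x⌋₊ : ℝ) - (⌊τe * x⌋₊ : ℝ)) ≤ τc * x := by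
    have h1 : (⌊τc * x⌋₊ : ℝ) ≤ τc * x := Nat.floor_le (mul_nonneg hτc.le hx0.le)
    have h2 : (0:ℝ) ≤ (⌊τe * x⌋₊ : ℝ) := Nat.cast_nonneg _
    linarith
  have hd2nonneg : (0:ℝ) ≤ ((⌊τc * x⌋₊ : ℝ) - (⌊τe * x⌋₊ : ℝ)) := by
    have hmono : (⌊τe * x⌋₊ : ℕ) ≤ ⌊τc * x⌋₊ :=
      Nat.floor_le_floor (by nlinarith)
    have : ((⌊τe * x⌋₊ : ℕ) : ℝ) ≤ ((⌊τc * x⌋₊ : ℕ) : ℝ) := Nat.cast_le.mpr hmono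
    linarith
  have hterm2 : α₃ * ((⌊τc * x⌋₊ : ℝ) - (⌊τe * x⌋₊ : ℝ)) * Real.log (1 + ca / x ^ a)
      ≤ C₁ * x ^ (1 - a) := by
    have s1 : ((⌊τc * x⌋₊ : ℝ) - (⌊τe * x⌋₊ : ℝ)) * Real.log (1 + ca / x ^ a)
        ≤ (τc * x) * Real.log (1 + ca / x ^ a) := mul_le_mul_of_nonneg_right hd2 hL2
    have s2 : (τc * x) * Real.log (1 + ca / x ^ a) ≤ (τc * x) * (ca / x ^ a) :=
      mul_le_mul_of_nonneg_left hL2' (mul_nonneg hτc.le hx0.le)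
    have s3 : ((⌊τc * x⌋₊ : ℝ) - (⌊τe * x⌋₊ : ℝ)) * Real.log (1 + ca / x ^ a)
        ≤ (τc * x) * (ca / x ^ a) := le_trans s1 s2
    have s4 := mul_le_mul_of_nonneg_left s3 hα₃.le
    have hxpow : ca * x ^ (1 - a) = x * (ca / x ^ a) := by
      rw [rpow_sub hx0, rpow_one]; ring
    calc α₃ * ((⌊τc * x⌋₊ : ℝ) - (⌊τe * x⌋₊ : ℝ)) * Real.log (1 + ca / x ^ a)
        = α₃ * (((⌊τc * x⌋₊ : ℝ) - (⌊τe * x⌋₊ : ℝ)) * Real.log (1 + ca / x ^ a)) := by ring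
      _ ≤ α₃ * ((τc * x) * (ca / x ^ a)) := s4
      _ = α₃ * τc * (x * (ca / x ^ a)) := by ring
      _ = C₁ * x ^ (1 - a) := by rw [← hxpow, hC₁]; ring
  -- term 3 bound
  have hL3 : Real.log (1 - cb / x ^ b) ≤ -(cb / x ^ b) := by
    have := Real.log_le_sub_one_of_pos (x := 1 - cb / x ^ b) (by linarith)
    linarith
  have hLneg : Real.log (1 - cb / x ^ b) ≤ 0 := by linarith
  have hd3 : (τr - τc) / 2 * x ≤ ((⌊τr * x⌋₊ : ℝ) - (⌊τc * x⌋₊ : ℝ)) := by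
    have h1 : τr * x - 1 < (⌊τr * x⌋₊ : ℝ) := Nat.sub_one_lt_floor (τr * x)
    have h2 : (⌊τc * x⌋₊ : ℝ) ≤ τc * x := Nat.floor_le (mul_nonneg hτc.le hx0.le)
    have hxbig : 2 / (τr - τc) ≤ x := le_trans (le_max_right _ _) hx1
    have h3 : 2 ≤ x * (τr - τc) := (div_le_iff₀ hτrc).1 hxbig
    nlinarith
  have hδ : (0:ℝ) ≤ (τr - τc) / 2 * x := mul_nonneg (by linarith) hx0.le
  have hterm3 : α₄ * ((⌊τr * x⌋₊ : ℝ) - (⌊τc * x⌋₊ : ℝ)) * Real.log (1 - cb / x ^ b)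
      ≤ -(C₂ * x ^ (1 - b)) := by
    have s1 : ((⌊τr * x⌋₊ : ℝ) - (⌊τc * x⌋₊ : ℝ)) * Real.log (1 - cb / x ^ b)
        ≤ ((τr - τc) / 2 * x) * Real.log (1 - cb / x ^ b) :=
      mul_le_mul_of_nonpos_right hd3 hLneg
    have s2 : ((τr - τc) / 2 * x) * Real.log (1 - cb / x ^ b)
        ≤ ((τr - τc) / 2 * x) * (-(cb / x ^ b)) := mul_le_mul_of_nonneg_left hL3 hδ
    have s4 := mul_le_mul_of_nonneg_left (le_trans s1 s2) hα₄.le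
    have hxpow : cb * x ^ (1 - b) = x * (cb / x ^ b) := by
      rw [rpow_sub hx0, rpow_one]; ring
    calc α₄ * ((⌊τr * x⌋₊ : ℝ) - (⌊τc * x⌋₊ : ℝ)) * Real.log (1 - cb / x ^ b)
        = α₄ * (((⌊τr * x⌋₊ : ℝ) - (⌊τc * x⌋₊ : ℝ)) * Real.log (1 - cb / x ^ b)) := by ring
      _ ≤ α₄ * (((τr - τc) / 2 * x) * (-(cb / x ^ b))) := s4
      _ = -(α₄ * ((τr - τc) / 2) * (x * (cb / x ^ b))) := by ring
      _ = -(C₂ * x ^ (1 - b)) := by rw [← hxpow, hC₂def]; ring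
  linarith

/-- With `0 < τ_e < τ_c < τ_r < 1`, `c_a, c_b > 0`, `0 < b < a < 1`,
`φ_a = 1 + c_a/T^a`, `φ_b = 1 - c_b/T^b`, and break dates `k_e = ⌊τ_e T⌋`,
`k_c = ⌊τ_c T⌋`, `k_r = ⌊τ_r T⌋`: for every `α₁ ∈ ℝ` and `α₃, α₄ > 0`,
`T^{α₁} φ_a^{α₃ (k_c-k_e)} φ_b^{α₄ (k_r-k_c)} → 0`. -/
theorem stmt_3 (τe τc τr ca cb a b : ℝ)
    (hτ0 : 0 < τe) (hτ1 : τe < τc) (hτ2 : τc < τr) (hτ3 : τr < 1)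
    (hca : 0 < ca) (hcb : 0 < cb) (hb : 0 < b) (hba : b < a) (ha1 : a < 1)
    (α₁ α₃ α₄ : ℝ) (hα₃ : 0 < α₃) (hα₄ : 0 < α₄) :
    Tendsto (fun T : ℕ =>
      (T : ℝ) ^ α₁ *
      (1 + ca / (T : ℝ) ^ a) ^ (α₃ * ((⌊τc * (T : ℝ)⌋₊ : ℝ) - (⌊τe * (T : ℝ)⌋₊ : ℝ))) *
      (1 - cb / (T : ℝ) ^ b) ^ (α₄ * ((⌊τr * (T : ℝ)⌋₊ : ℝ) - (⌊τc * (T : ℝ)⌋₊ : ℝ))))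
      atTop (nhds 0) := by
  have haux := stmt3_aux τe τc τr ca cb a b hτ0 hτ1 hτ2 hτ3 hca hcb hb hba ha1 α₁ α₃ α₄ hα₃ hα₄
  have hcast : Tendsto (fun T : ℕ => (T : ℝ)) atTop atTop := tendsto_natCast_atTop_atTop
  have hlog := haux.comp hcast
  have hexp := Real.tendsto_exp_atBot.comp hlog
  refine hexp.congr' ?_
  have hbig : Tendsto (fun T : ℕ => (T : ℝ) ^ b) atTop atTop :=
    (tendsto_rpow_atTop hb).comp hcast
  filter_upwards [hcast.eventually_ge_atTop 1, hbig.eventually_gt_atTop cb] with T hT1 hTb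
  have hT0 : (0:ℝ) < (T:ℝ) := by linarith
  have hxa : (0:ℝ) < (T:ℝ) ^ a := rpow_pos_of_pos hT0 _
  have hxb : (0:ℝ) < (T:ℝ) ^ b := rpow_pos_of_pos hT0 _
  have h1 : (0:ℝ) < 1 + ca / (T:ℝ) ^ a := by
    have := div_pos hca hxa; linarith
  have h2 : (0:ℝ) < 1 - cb / (T:ℝ) ^ b := by
    have : cb / (T:ℝ) ^ b < 1 := (div_lt_one hxb).2 hTb
    linarith
  simp only [Function.comp]
  have e1 : Real.exp (α₁ * Real.log (T:ℝ)) = (T:ℝ) ^ α₁ := by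
    rw [Real.rpow_def_of_pos hT0, mul_comm]
  have e2 : Real.exp (α₃ * ((⌊τc * (T:ℝ)⌋₊ : ℝ) - (⌊τe * (T:ℝ)⌋₊ : ℝ))
        * Real.log (1 + ca / (T:ℝ) ^ a))
      = (1 + ca / (T:ℝ) ^ a) ^ (α₃ * ((⌊τc * (T:ℝ)⌋₊ : ℝ) - (⌊τe * (T:ℝ)⌋₊ : ℝ))) := by
    rw [Real.rpow_def_of_pos h1, mul_comm]
  have e3 : Real.exp (α₄ * ((⌊τr * (T:ℝ)⌋₊ : ℝ) - (⌊τc * (T:ℝ)⌋₊ : ℝ))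
        * Real.log (1 - cb / (T:ℝ) ^ b))
      = (1 - cb / (T:ℝ) ^ b) ^ (α₄ * ((⌊τr * (T:ℝ)⌋₊ : ℝ) - (⌊τc * (T:ℝ)⌋₊ : ℝ))) := by
    rw [Real.rpow_def_of_pos h2, mul_comm]
  rw [Real.exp_add, Real.exp_add, e1, e2, e3]
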